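/- Let 𝒫(z,w) = w + 8z² − 7z³ + 8z²w + w² − 11zw, and for τ ∈ ℂ define z₂(τ) = (τ + 9)(2τ + 27)/(τ(5τ + 72)) and w₂(τ) = (2τ + 27)²(2τ − 9)/(τ²(5τ + 72)). Then for every τ ∈ ℂ with τ(5τ + 72) ≠ 0 one has 𝒫(z₂(τ), w₂(τ)) = 0. (Thus τ ↦ (z₂(τ), w₂(τ)) is a rational parametrization of the cubic component Γ_{d,−1/3,2} = {𝒫 = 0} of the critical level curve {R_d = −1/3}.) -/
import Mathlib

lemma stmt_14_aux (N M D : ℂ) (hD : D ≠ 0) :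
    (M/D + 8*(N/D)^2 - 7*(N/D)^3 + 8*(N/D)^2*(M/D) + (M/D)^2 - 11*(N/D)*(M/D)) * D^3
    = M*D^2 + 8*N^2*D - 7*N^3 + 8*N^2*M + M^2*D - 11*N*M*D := by
  have hi : D * D⁻¹ = 1 := mul_inv_cancel₀ hD
  simp only [div_eq_mul_inv]
  linear_combination (M*D^2 + 8*N^2*D*(D⁻¹*D+1) - 7*N^3*((D⁻¹*D)^2+D⁻¹*D+1)
    + 8*N^2*M*((D⁻¹*D)^2+D⁻¹*D+1) + M^2*D*(D⁻¹*D+1) - 11*N*M*D*(D⁻¹*D+1)) * hi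

/-- Rational parametrization of the cubic component
`Γ_{d,−1/3,2} = {w + 8z² − 7z³ + 8z²w + w² − 11zw = 0}` of the critical level curve
`{R_d = −1/3}`. -/
theorem stmt_14 (P : ℂ → ℂ → ℂ)
    (hP : ∀ z w : ℂ, P z w = w + 8*z^2 - 7*z^3 + 8*z^2*w + w^2 - 11*z*w)
    (z₂ w₂ : ℂ → ℂ)
    (hz₂ : ∀ τ : ℂ, z₂ τ = (τ + 9) * (2*τ + 27) / (τ * (5*τ + 72)))
    (hw₂ : ∀ τ : ℂ, w₂ τ = (2*τ + 27)^2 * (2*τ - 9) / (τ^2 * (5*τ + 72))) :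
    ∀ τ : ℂ, τ * (5*τ + 72) ≠ 0 → P (z₂ τ) (w₂ τ) = 0 := by
  intro τ h
  have hτ : τ ≠ 0 := fun h0 => h (by rw [h0]; ring)
  have h5 : (5*τ + 72) ≠ 0 := fun h0 => h (by rw [h0]; ring)
  have hD : τ^2 * (5*τ + 72) ≠ 0 := mul_ne_zero (pow_ne_zero _ hτ) h5
  have e1 : z₂ τ = τ*(τ+9)*(2*τ+27) / (τ^2 * (5*τ+72)) := by
    rw [hz₂, div_eq_div_iff h hD]; ring
  have key : P (z₂ τ) (w₂ τ) * (τ^2 * (5*τ+72))^3 = 0 := by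
    rw [hP, e1, hw₂, stmt_14_aux _ _ _ hD]
    ring
  exact (mul_eq_zero.mp key).resolve_right (pow_ne_zero _ hD)
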